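/- Let λ ∈ L¹(Ω) satisfy 0 < Λ₁ ≤ ‖λ‖_{L¹} ≤ Λ₂. If (μ/σ)·(T_max/T_min)^{σ−1}·(Λ₂/Λ₁) < 1, then the wage fixed-point equation for λ has a unique solution W in C_{0+}(Ω). -/

import Mathlib

open MeasureTheory Real Set

/-- The price index operator `G[λ](x) = [(1/F) ∫_Ω |λ(y)| T(x,y)^{1-σ} dy]^{1/(1-σ)}`. -/
noncomputable def priceIndex {n : ℕ} (Ω : Set (Fin n → ℝ)) (F σ : ℝ)
    (T : (Fin n → ℝ) → (Fin n → ℝ) → ℝ) (lam : (Fin n → ℝ) → ℝ)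
    (x : Fin n → ℝ) : ℝ :=
  ((1 / F) * ∫ y in Ω, |lam y| * T x y ^ (1 - σ)) ^ (1 / (1 - σ))

/-- `W` is a nonnegative continuous solution on `Ω` of the wage fixed-point equation for `lam`. -/
def IsWageSolution {n : ℕ} (Ω : Set (Fin n → ℝ)) (F σ μ : ℝ)
    (T : (Fin n → ℝ) → (Fin n → ℝ) → ℝ) (φ lam W : (Fin n → ℝ) → ℝ) : Prop :=
  ContinuousOn W Ω ∧ (∀ x ∈ Ω, 0 ≤ W x) ∧
  ∀ x ∈ Ω, W x = (μ / (σ * F)) *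
    ∫ y in Ω, (W y * |lam y| + φ y) * priceIndex Ω F σ T lam y ^ (σ - 1) * T x y ^ (1 - σ)

theorem wage_fixed_point_existence_uniqueness {n : ℕ} (Ω : Set (Fin n → ℝ))
    (hΩc : IsCompact Ω) (hΩpos : 0 < volume Ω)
    (T : (Fin n → ℝ) → (Fin n → ℝ) → ℝ)
    (hTcont : ContinuousOn (fun p : (Fin n → ℝ) × (Fin n → ℝ) => T p.1 p.2) (Ω ×ˢ Ω))
    (Tmin Tmax : ℝ) (hTmin : 1 ≤ Tmin)
    (hT : ∀ x ∈ Ω, ∀ y ∈ Ω, T x y ∈ Icc Tmin Tmax)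
    (σ μ F Φ : ℝ) (hσ : 1 < σ) (hμ : μ ∈ Ioo (0 : ℝ) 1) (hF : 0 < F) (hΦ : 0 < Φ)
    (φ : (Fin n → ℝ) → ℝ) (hφint : IntegrableOn φ Ω)
    (hφ0 : ∀ᵐ x ∂(volume.restrict Ω), 0 ≤ φ x) (hφΦ : (∫ x in Ω, φ x) = Φ)
    (lam : (Fin n → ℝ) → ℝ) (hlam : IntegrableOn lam Ω)
    (Λ₁ Λ₂ : ℝ) (hΛ₁ : 0 < Λ₁)
    (h₁ : Λ₁ ≤ ∫ x in Ω, |lam x|) (h₂ : (∫ x in Ω, |lam x|) ≤ Λ₂)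
    (hcond : μ / σ * (Tmax / Tmin) ^ (σ - 1) * (Λ₂ / Λ₁) < 1) :
    ∃ W : (Fin n → ℝ) → ℝ, IsWageSolution Ω F σ μ T φ lam W ∧
      ∀ W' : (Fin n → ℝ) → ℝ, IsWageSolution Ω F σ μ T φ lam W' → EqOn W' W Ω := by
  classical
  obtain ⟨x₀, hx₀⟩ : Ω.Nonempty := nonempty_of_measure_ne_zero hΩpos.ne'
  have hΩm : MeasurableSet Ω := hΩc.isClosed.measurableSet
  have hΩfin : volume Ω < ⊤ := hΩc.measure_lt_top
  have hTmin0 : (0:ℝ) < Tmin := lt_of_lt_of_le one_pos hTmin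
  have hTmax1 : (1:ℝ) ≤ Tmax := hTmin.trans ((hT x₀ hx₀ x₀ hx₀).1.trans (hT x₀ hx₀ x₀ hx₀).2)
  have hTmax0 : (0:ℝ) < Tmax := lt_of_lt_of_le one_pos hTmax1
  have hσ0 : (0:ℝ) < σ := lt_trans one_pos hσ
  have h1σ : 1 - σ < 0 := by linarith
  set L : ℝ := ∫ x in Ω, |lam x| with hLdef
  have hL0 : 0 < L := lt_of_lt_of_le hΛ₁ h₁
  have hlamabs : IntegrableOn (fun y => |lam y|) Ω := hlam.abs
  -- basic pointwise facts about T
  have hTpos : ∀ x ∈ Ω, ∀ y ∈ Ω, 0 < T x y := fun x hx y hy =>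
    lt_of_lt_of_le hTmin0 (hT x hx y hy).1
  have hTr_nonneg : ∀ x ∈ Ω, ∀ y ∈ Ω, 0 ≤ T x y ^ (1 - σ) := fun x hx y hy =>
    Real.rpow_nonneg (hTpos x hx y hy).le _
  have hTr_le_one : ∀ x ∈ Ω, ∀ y ∈ Ω, T x y ^ (1 - σ) ≤ 1 := fun x hx y hy =>
    Real.rpow_le_one_of_one_le_of_nonpos (hTmin.trans (hT x hx y hy).1) h1σ.le
  have hTr_le : ∀ x ∈ Ω, ∀ y ∈ Ω, T x y ^ (1 - σ) ≤ Tmin ^ (1 - σ) := fun x hx y hy =>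
    Real.rpow_le_rpow_of_nonpos hTmin0 (hT x hx y hy).1 h1σ.le
  have hTr_ge : ∀ x ∈ Ω, ∀ y ∈ Ω, Tmax ^ (1 - σ) ≤ T x y ^ (1 - σ) := fun x hx y hy =>
    Real.rpow_le_rpow_of_nonpos (hTpos x hx y hy) (hT x hx y hy).2 h1σ.le
  -- subtype instances
  haveI : CompactSpace Ω := isCompact_iff_compactSpace.mp hΩc
  haveI : Nonempty Ω := ⟨⟨x₀, hx₀⟩⟩
  have hTc2 : Continuous fun p : Ω × Ω => T p.1.1 p.2.1 := by
    have h := hTcont.comp_continuous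
      (f := fun p : Ω × Ω => ((p.1 : Fin n → ℝ), (p.2 : Fin n → ℝ)))
      ((continuous_subtype_val.comp continuous_fst).prodMk
        (continuous_subtype_val.comp continuous_snd))
      (fun p => ⟨p.1.2, p.2.2⟩)
    exact h
  have hTcy : ∀ x ∈ Ω, ContinuousOn (fun y => T x y) Ω := by
    intro x hx
    exact hTcont.comp (f := fun y => (x, y)) (continuousOn_const.prodMk continuousOn_id) (fun y hy => ⟨hx, hy⟩)
  -- integrability of h y * T x y ^ (1-σ)
  have keyInt : ∀ h : (Fin n → ℝ) → ℝ, IntegrableOn h Ω → ∀ x ∈ Ω,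
      IntegrableOn (fun y => h y * T x y ^ (1 - σ)) Ω := by
    intro h hh x hx
    have hm : AEStronglyMeasurable (fun y => T x y ^ (1 - σ)) (volume.restrict Ω) := by
      apply ContinuousOn.aestronglyMeasurable _ hΩm
      exact (hTcy x hx).rpow_const (fun y hy => Or.inl (hTpos x hx y hy).ne')
    have hbd : ∀ᵐ y ∂(volume.restrict Ω), ‖T x y ^ (1 - σ)‖ ≤ 1 := by
      filter_upwards [ae_restrict_mem hΩm] with y hy
      rw [Real.norm_eq_abs, abs_of_nonneg (hTr_nonneg x hx y hy)]
      exact hTr_le_one x hx y hy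
    exact (hh.bdd_mul hm hbd).congr (Filter.Eventually.of_forall fun y => mul_comm _ _)
  -- continuity in x of the parametrized integral
  have keyCont : ∀ h : (Fin n → ℝ) → ℝ, IntegrableOn h Ω →
      Continuous fun x : Ω => ∫ y in Ω, h y * T x.1 y ^ (1 - σ) := by
    intro h hh
    apply continuous_of_dominated (bound := fun y => |h y|)
    · exact fun x => (keyInt h hh x.1 x.2).aestronglyMeasurable
    · intro x
      filter_upwards [ae_restrict_mem hΩm] with y hy
      rw [Real.norm_eq_abs, abs_mul, abs_of_nonneg (hTr_nonneg x.1 x.2 y hy)]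
      calc |h y| * T x.1 y ^ (1 - σ) ≤ |h y| * 1 :=
            mul_le_mul_of_nonneg_left (hTr_le_one x.1 x.2 y hy) (abs_nonneg _)
        _ = |h y| := mul_one _
    · exact hh.abs
    · filter_upwards [ae_restrict_mem hΩm] with y hy
      have hc : Continuous fun x : Ω => T x.1 y :=
        hTc2.comp (continuous_id.prodMk (continuous_const (y := (⟨y, hy⟩ : Ω))))
      have hc2 : Continuous fun x : Ω => T x.1 y ^ (1 - σ) := by
        rw [continuous_iff_continuousAt]
        intro x
        exact (hc.continuousAt).rpow_const (Or.inl (hTpos x.1 x.2 y hy).ne')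
      exact continuous_const.mul hc2
  -- the inner integral I and the kernel factor K
  set I : (Fin n → ℝ) → ℝ := fun y => ∫ z in Ω, |lam z| * T y z ^ (1 - σ) with hIdef
  have hIub : ∀ y ∈ Ω, I y ≤ L * Tmin ^ (1 - σ) := by
    intro y hy
    have : L * Tmin ^ (1 - σ) = ∫ z in Ω, |lam z| * Tmin ^ (1 - σ) := by
      rw [hLdef, ← integral_mul_const]
    rw [this]
    apply setIntegral_mono_on (keyInt _ hlamabs y hy)
      (hlamabs.mul_const _) hΩm
    intro z hz
    exact mul_le_mul_of_nonneg_left (hTr_le y hy z hz) (abs_nonneg _)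
  have hIlb : ∀ y ∈ Ω, L * Tmax ^ (1 - σ) ≤ I y := by
    intro y hy
    have h0 : L * Tmax ^ (1 - σ) = ∫ z in Ω, |lam z| * Tmax ^ (1 - σ) := by
      rw [hLdef, ← integral_mul_const]
    rw [h0]
    apply setIntegral_mono_on (hlamabs.mul_const _)
      (keyInt _ hlamabs y hy) hΩm
    intro z hz
    exact mul_le_mul_of_nonneg_left (hTr_ge y hy z hz) (abs_nonneg _)
  have hI0 : ∀ y ∈ Ω, 0 < I y := fun y hy =>
    lt_of_lt_of_le (mul_pos hL0 (Real.rpow_pos_of_pos hTmax0 _)) (hIlb y hy)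
  set K : (Fin n → ℝ) → ℝ := fun y => priceIndex Ω F σ T lam y ^ (σ - 1) with hKdef
  have hKeq : ∀ y ∈ Ω, K y = F / I y := by
    intro y hy
    have hne : (1:ℝ) - σ ≠ 0 := by linarith
    have hFne : F ≠ 0 := hF.ne'
    have hIne : I y ≠ 0 := (hI0 y hy).ne'
    have ha : (0:ℝ) ≤ (1 / F) * I y := (mul_pos (by positivity) (hI0 y hy)).le
    have hexp : (1 / (1 - σ)) * (σ - 1) = -1 := by
      rw [div_mul_eq_mul_div, one_mul, div_eq_iff hne]; ring
    calc K y = (((1 / F) * I y) ^ (1 / (1 - σ))) ^ (σ - 1) := rfl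
      _ = ((1 / F) * I y) ^ ((1 / (1 - σ)) * (σ - 1)) := (Real.rpow_mul ha _ _).symm
      _ = ((1 / F) * I y) ^ (-1 : ℝ) := by rw [hexp]
      _ = ((1 / F) * I y)⁻¹ := Real.rpow_neg_one _
      _ = F / I y := by field_simp
  have hK0 : ∀ y ∈ Ω, 0 ≤ K y := by
    intro y hy
    rw [hKeq y hy]
    exact div_nonneg hF.le (hI0 y hy).le
  set Kb : ℝ := F * Tmax ^ (σ - 1) / L with hKbdef
  have hKb0 : 0 < Kb := by positivity
  have hTmaxinv : Tmax ^ (1 - σ) = (Tmax ^ (σ - 1))⁻¹ := by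
    rw [show (1 - σ) = -(σ - 1) by ring, Real.rpow_neg hTmax0.le]
  have hKub : ∀ y ∈ Ω, K y ≤ Kb := by
    intro y hy
    rw [hKeq y hy, hKbdef]
    have h1 : F / I y ≤ F / (L * Tmax ^ (1 - σ)) := by
      apply div_le_div_of_nonneg_left hF.le
        (mul_pos hL0 (Real.rpow_pos_of_pos hTmax0 _)) (hIlb y hy)
    refine h1.trans_eq ?_
    rw [hTmaxinv]
    field_simp
  have hKcont : ContinuousOn K Ω := by
    have hIc : ContinuousOn I Ω := by
      rw [continuousOn_iff_continuous_restrict]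
      exact keyCont _ hlamabs
    have hPc : ContinuousOn (fun y => priceIndex Ω F σ T lam y) Ω := by
      apply ContinuousOn.rpow_const (continuousOn_const.mul hIc)
      intro y hy
      exact Or.inl (mul_pos (by positivity : (0:ℝ) < 1 / F) (hI0 y hy)).ne'
    exact hPc.rpow_const fun y hy => Or.inr (by linarith)
  have hKm : AEStronglyMeasurable K (volume.restrict Ω) := hKcont.aestronglyMeasurable hΩm
  -- extension of continuous maps on Ω to the ambient space
  set ext : C(Ω, ℝ) → (Fin n → ℝ) → ℝ :=
    fun W y => if hy : y ∈ Ω then W ⟨y, hy⟩ else 0 with hextdef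
  have hextOn : ∀ (W : C(Ω, ℝ)) (y : (Fin n → ℝ)) (hy : y ∈ Ω), ext W y = W ⟨y, hy⟩ := by
    intro W y hy; simp [hextdef, hy]
  have hextCont : ∀ W : C(Ω, ℝ), ContinuousOn (ext W) Ω := by
    intro W
    rw [continuousOn_iff_continuous_restrict]
    have : Set.restrict Ω (ext W) = ⇑W := by
      funext y; simp [hextdef, Set.restrict, y.2]
    rw [show Ω.domRestrict (ext W) = ⇑W from this]; exact W.continuous
  have hextm : ∀ W : C(Ω, ℝ), AEStronglyMeasurable (ext W) (volume.restrict Ω) :=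
    fun W => (hextCont W).aestronglyMeasurable hΩm
  have hextbd : ∀ (W : C(Ω, ℝ)) (y : (Fin n → ℝ)), ‖ext W y‖ ≤ ‖W‖ := by
    intro W y
    by_cases hy : y ∈ Ω
    · rw [hextOn W y hy]; exact W.norm_coe_le_norm ⟨y, hy⟩
    · simp [hextdef, hy]
  -- integrability of the full integrand
  have hg1 : ∀ W : C(Ω, ℝ), IntegrableOn (fun y => ext W y * |lam y|) Ω := by
    intro W
    exact hlamabs.bdd_mul (hextm W) (Filter.Eventually.of_forall (hextbd W))
  have hg2 : ∀ W : C(Ω, ℝ), IntegrableOn (fun y => ext W y * |lam y| + φ y) Ω :=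
    fun W => (hg1 W).add hφint
  have hgK : ∀ W : C(Ω, ℝ), IntegrableOn (fun y => (ext W y * |lam y| + φ y) * K y) Ω := by
    intro W
    have hbd : ∀ᵐ y ∂(volume.restrict Ω), ‖K y‖ ≤ Kb := by
      filter_upwards [ae_restrict_mem hΩm] with y hy
      rw [Real.norm_eq_abs, abs_of_nonneg (hK0 y hy)]
      exact hKub y hy
    exact ((hg2 W).bdd_mul hKm hbd).congr
      (Filter.Eventually.of_forall fun y => mul_comm _ _)
  have hfullInt : ∀ (W : C(Ω, ℝ)) (x : (Fin n → ℝ)), x ∈ Ω →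
      IntegrableOn (fun y => (ext W y * |lam y| + φ y) * K y * T x y ^ (1 - σ)) Ω :=
    fun W x hx => keyInt _ (hgK W) x hx
  -- the operator A
  set c : ℝ := μ / (σ * F) with hcdef
  have hc0 : 0 < c := by
    rw [hcdef]; exact div_pos hμ.1 (mul_pos hσ0 hF)
  set A : C(Ω, ℝ) → C(Ω, ℝ) := fun W =>
    ⟨fun x => c * ∫ y in Ω, (ext W y * |lam y| + φ y) * K y * T x.1 y ^ (1 - σ),
     continuous_const.mul (keyCont _ (hgK W))⟩ with hAdef
  have hAapp : ∀ (W : C(Ω, ℝ)) (x : Ω),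
      A W x = c * ∫ y in Ω, (ext W y * |lam y| + φ y) * K y * T x.1 y ^ (1 - σ) := by
    intro W x; rfl
  -- the contraction constant
  set q : ℝ := μ / σ * (Tmax ^ (σ - 1) * Tmin ^ (1 - σ)) with hqdef
  have hq0 : 0 ≤ q := by
    rw [hqdef]
    exact mul_nonneg (div_nonneg hμ.1.le hσ0.le)
      (mul_nonneg (Real.rpow_nonneg hTmax0.le _) (Real.rpow_nonneg hTmin0.le _))
  have hqeq : μ / σ * (Tmax / Tmin) ^ (σ - 1) = q := by
    rw [hqdef, Real.div_rpow hTmax0.le hTmin0.le,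
      show (1 - σ) = -(σ - 1) by ring, Real.rpow_neg hTmin0.le]
    ring
  have hq1 : q < 1 := by
    have hΛ : (1:ℝ) ≤ Λ₂ / Λ₁ := (one_le_div hΛ₁).mpr (h₁.trans h₂)
    calc q = q * 1 := (mul_one q).symm
      _ ≤ q * (Λ₂ / Λ₁) := mul_le_mul_of_nonneg_left hΛ hq0
      _ < 1 := by rw [← hqeq]; exact hcond
  -- contraction estimate
  have hlip : ∀ W₁ W₂ : C(Ω, ℝ), dist (A W₁) (A W₂) ≤ q * dist W₁ W₂ := by
    intro W₁ W₂
    rw [ContinuousMap.dist_le (mul_nonneg hq0 dist_nonneg)]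
    intro x
    set d : ℝ := dist W₁ W₂ with hddef
    have hd0 : 0 ≤ d := dist_nonneg
    have hsub : A W₁ x - A W₂ x =
        c * ∫ y in Ω, (ext W₁ y - ext W₂ y) * |lam y| * K y * T x.1 y ^ (1 - σ) := by
      rw [hAapp, hAapp, ← mul_sub, ← integral_sub (hfullInt W₁ x.1 x.2) (hfullInt W₂ x.1 x.2)]
      congr 1
      apply setIntegral_congr_fun hΩm
      intro y hy
      ring
    rw [Real.dist_eq, hsub, abs_mul, abs_of_pos hc0]
    have hdiffInt : IntegrableOn
        (fun y => (ext W₁ y - ext W₂ y) * |lam y| * K y * T x.1 y ^ (1 - σ)) Ω := by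
      refine ((hfullInt W₁ x.1 x.2).sub (hfullInt W₂ x.1 x.2)).congr
        (Filter.Eventually.of_forall fun y => by simp only [Pi.sub_apply]; ring)
    have hbound : |∫ y in Ω, (ext W₁ y - ext W₂ y) * |lam y| * K y * T x.1 y ^ (1 - σ)|
        ≤ ∫ y in Ω, d * Kb * Tmin ^ (1 - σ) * |lam y| := by
      have habs : |∫ y in Ω, (ext W₁ y - ext W₂ y) * |lam y| * K y * T x.1 y ^ (1 - σ)|
          ≤ ∫ y in Ω, |(ext W₁ y - ext W₂ y) * |lam y| * K y * T x.1 y ^ (1 - σ)| := by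
        simpa only [Real.norm_eq_abs] using norm_integral_le_integral_norm
          (μ := volume.restrict Ω)
          (fun y => (ext W₁ y - ext W₂ y) * |lam y| * K y * T x.1 y ^ (1 - σ))
      refine habs.trans ?_
      apply setIntegral_mono_on
      · exact hdiffInt.abs
      · exact hlamabs.const_mul _
      · exact hΩm
      · intro y hy
        have hW : |ext W₁ y - ext W₂ y| ≤ d := by
          rw [hextOn W₁ y hy, hextOn W₂ y hy, ← Real.dist_eq]
          exact ContinuousMap.dist_apply_le_dist _
        have hTb : T x.1 y ^ (1 - σ) ≤ Tmin ^ (1 - σ) := hTr_le x.1 x.2 y hy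
        have hTnn : 0 ≤ T x.1 y ^ (1 - σ) := hTr_nonneg x.1 x.2 y hy
        calc |(ext W₁ y - ext W₂ y) * |lam y| * K y * T x.1 y ^ (1 - σ)|
            = |ext W₁ y - ext W₂ y| * |lam y| * K y * T x.1 y ^ (1 - σ) := by
              rw [abs_mul, abs_mul, abs_mul, abs_abs, abs_of_nonneg (hK0 y hy),
                abs_of_nonneg hTnn]
          _ ≤ d * |lam y| * Kb * Tmin ^ (1 - σ) := by
              apply mul_le_mul
              · apply mul_le_mul
                · exact mul_le_mul_of_nonneg_right hW (abs_nonneg _)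
                · exact hKub y hy
                · exact hK0 y hy
                · positivity
              · exact hTb
              · exact hTnn
              · positivity
          _ = d * Kb * Tmin ^ (1 - σ) * |lam y| := by ring
    have hint : ∫ y in Ω, d * Kb * Tmin ^ (1 - σ) * |lam y| =
        d * Kb * Tmin ^ (1 - σ) * L := by
      rw [hLdef, ← integral_const_mul]
    have : c * |∫ y in Ω, (ext W₁ y - ext W₂ y) * |lam y| * K y * T x.1 y ^ (1 - σ)|
        ≤ c * (d * Kb * Tmin ^ (1 - σ) * L) := by
      rw [← hint]
      exact mul_le_mul_of_nonneg_left hbound hc0.le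
    refine this.trans_eq ?_
    rw [hcdef, hqdef, hKbdef]
    field_simp
  set qnn : NNReal := ⟨q, hq0⟩ with hqnndef
  have hA : ContractingWith qnn A := by
    constructor
    · exact_mod_cast hq1
    · exact LipschitzWith.of_dist_le_mul hlip
  -- the fixed point
  set W₀ : C(Ω, ℝ) := ContractingWith.fixedPoint A hA with hW₀def
  have hfix : A W₀ = W₀ := hA.fixedPoint_isFixedPt
  -- nonnegativity: A maps nonneg cone to itself
  have hApos : ∀ W : C(Ω, ℝ), (∀ x, 0 ≤ W x) → ∀ x, 0 ≤ A W x := by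
    intro W hW x
    rw [hAapp]
    apply mul_nonneg hc0.le
    apply integral_nonneg_of_ae
    filter_upwards [hφ0, ae_restrict_mem hΩm] with y hφy hy
    apply mul_nonneg (mul_nonneg _ (hK0 y hy)) (hTr_nonneg x.1 x.2 y hy)
    apply add_nonneg _ hφy
    apply mul_nonneg _ (abs_nonneg _)
    rw [hextOn W y hy]
    exact hW _
  have hiter : ∀ k : ℕ, ∀ x, 0 ≤ (A^[k] 0) x := by
    intro k
    induction k with
    | zero => intro x; simp
    | succ m ih =>
      intro x
      rw [Function.iterate_succ_apply']
      exact hApos _ ih x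
  have hSclosed : IsClosed {W : C(Ω, ℝ) | ∀ x, 0 ≤ W x} := by
    have : {W : C(Ω, ℝ) | ∀ x, 0 ≤ W x} =
        ⋂ x : Ω, (fun W : C(Ω, ℝ) => W x) ⁻¹' Ici 0 := by
      ext W; simp [Set.mem_iInter]
    rw [this]
    exact isClosed_iInter fun x =>
      isClosed_Ici.preimage (continuous_eval_const x)
  have hW₀pos : ∀ x, 0 ≤ W₀ x := by
    have htend := hA.tendsto_iterate_fixedPoint (0 : C(Ω, ℝ))
    exact hSclosed.mem_of_tendsto htend (Filter.Eventually.of_forall hiter)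
  -- conclusion
  refine ⟨ext W₀, ⟨hextCont W₀, ?_, ?_⟩, ?_⟩
  · intro x hx
    rw [hextOn W₀ x hx]
    exact hW₀pos _
  · intro x hx
    have hfx := congrFun (congrArg DFunLike.coe hfix) ⟨x, hx⟩
    rw [hAapp] at hfx
    rw [hextOn W₀ x hx, ← hfx]
  · intro W' hW'
    obtain ⟨hW'c, hW'pos, hW'eq⟩ := hW'
    set W'₀ : C(Ω, ℝ) := ⟨fun x => W' x.1, continuousOn_iff_continuous_restrict.mp hW'c⟩
      with hW'₀def
    have hfix' : A W'₀ = W'₀ := by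
      apply ContinuousMap.ext
      intro x
      rw [hAapp]
      have heq : ∫ y in Ω, (ext W'₀ y * |lam y| + φ y) * K y * T x.1 y ^ (1 - σ) =
          ∫ y in Ω, (W' y * |lam y| + φ y) * K y * T x.1 y ^ (1 - σ) := by
        apply setIntegral_congr_fun hΩm
        intro y hy
        simp only [hextOn W'₀ y hy]
        rfl
      rw [heq]
      have := hW'eq x.1 x.2
      rw [hcdef]
      exact this.symm
    have : W'₀ = W₀ := hA.fixedPoint_unique' hfix' hfix
    intro x hx
    rw [hextOn W₀ x hx, ← this]
    rfl
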